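/- Let ν > 0, a > 0 and ξ ∈ ℝ. Then the improper integral of t ↦ e^{−at} · e^{−ξ²/(4νt)} / √(4πνt) over (0, ∞) converges and equals e^{−√(a/ν) |ξ|} / (2 √(aν)). Equivalently, with ψ = √(a/ν), the integral equals exp(−ψ|ξ|)/(2ψν). -/

import Mathlib

open Real MeasureTheory Set

lemma glasser_image (c : ℝ) (hc : 0 < c) : (fun u : ℝ => u - c / u) '' Ioi 0 = univ := by
  ext w
  simp only [mem_image, mem_univ, iff_true, mem_Ioi]
  have hs : |w| < Real.sqrt (w ^ 2 + 4 * c) := by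
    rw [← Real.sqrt_sq_eq_abs]
    exact Real.sqrt_lt_sqrt (sq_nonneg w) (by linarith)
  have hu : 0 < (w + Real.sqrt (w ^ 2 + 4 * c)) / 2 := by
    have := neg_abs_le w
    linarith
  refine ⟨(w + Real.sqrt (w ^ 2 + 4 * c)) / 2, hu, ?_⟩
  have h2 : Real.sqrt (w ^ 2 + 4 * c) ^ 2 = w ^ 2 + 4 * c :=
    Real.sq_sqrt (by positivity)
  have hws : w + Real.sqrt (w ^ 2 + 4 * c) ≠ 0 := by
    intro h; rw [h] at hu; simp at hu
  field_simp [hws]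
  nlinarith [h2]

lemma glasser_deriv (c : ℝ) : ∀ u ∈ Ioi (0:ℝ),
    HasDerivWithinAt (fun u : ℝ => u - c / u) (1 + c / u ^ 2) (Ioi 0) u := by
  intro u hu
  have hu0 : u ≠ 0 := ne_of_gt hu
  have h := (hasDerivAt_id u).sub (((hasDerivAt_inv hu0).const_mul c))
  have : (1 : ℝ) - c * (-(u ^ 2)⁻¹) = 1 + c / u ^ 2 := by field_simp; ring
  rw [this] at h
  exact (h.congr_deriv rfl).hasDerivWithinAt.congr (fun x hx => by
    simp [div_eq_mul_inv]) (by simp [div_eq_mul_inv])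

lemma glasser_inj (c : ℝ) (hc : 0 < c) : InjOn (fun u : ℝ => u - c / u) (Ioi 0) := by
  intro x hx y hy h
  simp only [mem_Ioi] at hx hy
  have h2 : (x - y) * (x * y + c) = 0 := by
    field_simp at h
    nlinarith [h]
  rcases mul_eq_zero.mp h2 with h3 | h3
  · linarith
  · nlinarith

lemma glasser (c : ℝ) (hc : 0 < c) :
    IntegrableOn (fun u : ℝ => Real.exp (-(u - c / u) ^ 2)) (Ioi 0) ∧
    ∫ u in Ioi (0:ℝ), Real.exp (-(u - c / u) ^ 2) = Real.sqrt π / 2 := by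
  set g := fun u : ℝ => Real.exp (-(u - c / u) ^ 2) with hg
  -- integrability
  have hcont : ContinuousOn g (Ioi 0) := by
    apply Real.continuous_exp.comp_continuousOn
    apply ContinuousOn.neg
    apply ContinuousOn.pow
    exact continuousOn_id.sub (continuousOn_const.div continuousOn_id fun u hu => ne_of_gt hu)
  have hintg : IntegrableOn g (Ioi 0) := by
    apply Integrable.mono'
      (((integrable_exp_neg_mul_sq one_pos).restrict (s := Ioi 0)).const_mul (Real.exp (2 * c)))
      (hcont.aestronglyMeasurable measurableSet_Ioi)
    filter_upwards [ae_restrict_mem measurableSet_Ioi] with u hu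
    simp only [mem_Ioi] at hu
    have hu0 : u ≠ 0 := ne_of_gt hu
    have hexp : (u - c / u) ^ 2 = u ^ 2 - 2 * c + (c / u) ^ 2 := by field_simp; ring
    rw [hg, Real.norm_eq_abs, abs_of_pos (Real.exp_pos _), ← Real.exp_add]
    apply Real.exp_le_exp.mpr
    nlinarith [sq_nonneg (c / u)]
  refine ⟨hintg, ?_⟩
  -- symmetrization u ↦ c/u
  have himg2 : (fun v : ℝ => c / v) '' Ioi 0 = Ioi 0 := by
    ext x
    constructor
    · rintro ⟨v, hv, rfl⟩
      exact div_pos hc hv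
    · intro hx
      exact ⟨c / x, div_pos hc hx, by field_simp⟩
  have hd2 : ∀ v ∈ Ioi (0:ℝ), HasDerivWithinAt (fun v : ℝ => c / v) (-(c / v ^ 2)) (Ioi 0) v := by
    intro v hv
    have hv0 : v ≠ 0 := ne_of_gt hv
    have h := (hasDerivAt_inv hv0).const_mul c
    have : c * (-(v ^ 2)⁻¹) = -(c / v ^ 2) := by field_simp
    rw [this] at h
    exact h.hasDerivWithinAt.congr (fun x hx => by simp [div_eq_mul_inv]) (by simp [div_eq_mul_inv])
  have hinj2 : InjOn (fun v : ℝ => c / v) (Ioi 0) := by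
    intro x hx y hy h
    simp only [mem_Ioi] at hx hy
    field_simp at h
    exact h.symm
  have hgsym : ∀ v ∈ Ioi (0:ℝ), g (c / v) = g v := by
    intro v hv
    have hv0 : v ≠ 0 := ne_of_gt hv
    have h1 : c / (c / v) = v := by field_simp
    simp only [hg, h1]
    congr 1
    ring
  have key1 : ∫ u in Ioi (0:ℝ), g u = ∫ v in Ioi (0:ℝ), (c / v ^ 2) * g v := by
    conv_lhs => rw [← himg2]
    rw [integral_image_eq_integral_abs_deriv_smul measurableSet_Ioi hd2 hinj2]
    apply setIntegral_congr_fun measurableSet_Ioi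
    intro v hv
    have hv0 : (0:ℝ) < v := hv
    simp only [smul_eq_mul, abs_neg]
    rw [abs_of_pos (div_pos hc (by positivity)), hgsym v hv]
  have hint2 : IntegrableOn (fun v : ℝ => (c / v ^ 2) * g v) (Ioi 0) := by
    have h := (integrableOn_image_iff_integrableOn_abs_deriv_smul measurableSet_Ioi hd2 hinj2
      g).mp (by rw [himg2]; exact hintg)
    apply h.congr_fun ?_ measurableSet_Ioi
    intro v hv
    have hv0 : (0:ℝ) < v := hv
    simp only [smul_eq_mul, abs_neg]
    rw [abs_of_pos (div_pos hc (by positivity)), hgsym v hv]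
  -- main substitution w = u - c/u
  have key2 : ∫ u in Ioi (0:ℝ), (1 + c / u ^ 2) * g u = Real.sqrt π := by
    have h := integral_image_eq_integral_abs_deriv_smul measurableSet_Ioi
      (glasser_deriv c) (glasser_inj c hc) (fun w => Real.exp (-w ^ 2))
    rw [glasser_image c hc] at h
    have e : ∫ u in Ioi (0:ℝ), (1 + c / u ^ 2) * g u
        = ∫ x in Ioi (0:ℝ), |1 + c / x ^ 2| • Real.exp (-(x - c / x) ^ 2) := by
      apply setIntegral_congr_fun measurableSet_Ioi
      intro u hu
      have hu0 : (0:ℝ) < u := hu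
      simp only [smul_eq_mul]
      rw [abs_of_pos (by positivity)]
    rw [e, ← h, MeasureTheory.setIntegral_univ]
    have := integral_gaussian 1
    simpa using this
  have hadd : ∫ u in Ioi (0:ℝ), (1 + c / u ^ 2) * g u
      = (∫ u in Ioi (0:ℝ), g u) + ∫ v in Ioi (0:ℝ), (c / v ^ 2) * g v := by
    rw [← integral_add hintg hint2]
    congr 1
    ext u
    ring
  rw [key2, ← key1] at hadd
  linarith

lemma sub_gauss (a m : ℝ) (ha : 0 < a) (hm : 0 ≤ m) :
    IntegrableOn (fun s : ℝ => Real.exp (-(a * s ^ 2) - m / s ^ 2)) (Ioi 0) ∧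
    ∫ s in Ioi (0:ℝ), Real.exp (-(a * s ^ 2) - m / s ^ 2)
      = Real.sqrt (π / a) / 2 * Real.exp (-2 * Real.sqrt (a * m)) := by
  rcases eq_or_lt_of_le hm with hm0 | hm
  · have hfun : (fun s : ℝ => Real.exp (-(a * s ^ 2) - m / s ^ 2))
        = fun s : ℝ => Real.exp (-a * s ^ 2) := by
      funext s; rw [← hm0]; norm_num
    rw [hfun, ← hm0]
    refine ⟨(integrable_exp_neg_mul_sq ha).integrableOn, ?_⟩
    rw [integral_gaussian_Ioi]
    simp
  · have hsa : (0:ℝ) < Real.sqrt a := Real.sqrt_pos.mpr ha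
    have hsm : (0:ℝ) < Real.sqrt m := Real.sqrt_pos.mpr hm
    set C := Real.sqrt a * Real.sqrt m with hC
    have hCpos : 0 < C := mul_pos hsa hsm
    have hCeq : C = Real.sqrt (a * m) := (Real.sqrt_mul ha.le m).symm
    obtain ⟨hGint, hGval⟩ := glasser C hCpos
    set G := fun u : ℝ => Real.exp (-(u - C / u) ^ 2) with hGdef
    have hkey : ∀ s ∈ Ioi (0:ℝ),
        Real.exp (-(a * s ^ 2) - m / s ^ 2) = Real.exp (-2 * C) * G (Real.sqrt a * s) := by
      intro s hs
      have hs0 : s ≠ 0 := ne_of_gt hs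
      have hsas : Real.sqrt a * s ≠ 0 := by positivity
      have h1 : Real.sqrt a ^ 2 = a := Real.sq_sqrt ha.le
      have h2 : Real.sqrt m ^ 2 = m := Real.sq_sqrt hm.le
      have e1 : C / (Real.sqrt a * s) = Real.sqrt m / s :=
        mul_div_mul_left _ _ (ne_of_gt hsa)
      have e2 : Real.sqrt a * s * (Real.sqrt m / s) = C := by
        rw [hC]; field_simp
      rw [hGdef, ← Real.exp_add]
      congr 1
      rw [e1, sub_sq, mul_pow, div_pow, h1, h2, mul_assoc 2, e2]
      ring
    have hcomp : IntegrableOn (fun s : ℝ => G (Real.sqrt a * s)) (Ioi 0) := by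
      apply (integrableOn_Ioi_comp_mul_left_iff G 0 hsa).mpr
      simpa using hGint
    have hint : IntegrableOn (fun s : ℝ => Real.exp (-(a * s ^ 2) - m / s ^ 2)) (Ioi 0) := by
      have h : IntegrableOn (fun s : ℝ => Real.exp (-2 * C) * G (Real.sqrt a * s)) (Ioi 0) :=
        hcomp.const_mul (Real.exp (-2 * C))
      exact IntegrableOn.congr_fun h (fun s hs => (hkey s hs).symm) measurableSet_Ioi
    refine ⟨hint, ?_⟩
    rw [setIntegral_congr_fun measurableSet_Ioi hkey, integral_const_mul,
      integral_comp_mul_left_Ioi G 0 hsa]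
    rw [mul_zero] at *
    rw [hGval, hCeq, smul_eq_mul, Real.sqrt_div pi_pos.le]
    field_simp

/-- The Laplace transform of the cable-equation Green's function:
`∫_0^∞ e^{-at} e^{-ξ²/(4νt)}/√(4πνt) dt = e^{-√(a/ν)|ξ|}/(2√(aν))`. -/
theorem laplace_transform_cable_green (ν a : ℝ) (hν : 0 < ν) (ha : 0 < a) (ξ : ℝ) :
    IntegrableOn
      (fun t : ℝ => Real.exp (-a * t) * Real.exp (-ξ ^ 2 / (4 * ν * t))
        / Real.sqrt (4 * π * ν * t)) (Set.Ioi 0) ∧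
    ∫ t in Set.Ioi (0 : ℝ),
        Real.exp (-a * t) * Real.exp (-ξ ^ 2 / (4 * ν * t)) / Real.sqrt (4 * π * ν * t)
      = Real.exp (-Real.sqrt (a / ν) * |ξ|) / (2 * Real.sqrt (a * ν)) := by
  have hm : (0:ℝ) ≤ ξ ^ 2 / (4 * ν) := by positivity
  obtain ⟨hint, hval⟩ := sub_gauss a (ξ ^ 2 / (4 * ν)) ha hm
  set f := fun t : ℝ => Real.exp (-a * t) * Real.exp (-ξ ^ 2 / (4 * ν * t))
      / Real.sqrt (4 * π * ν * t) with hf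
  have hd : ∀ s ∈ Ioi (0:ℝ), HasDerivWithinAt (fun s : ℝ => s ^ 2) (2 * s) (Ioi 0) s := by
    intro s hs
    simpa using (hasDerivAt_pow 2 s).hasDerivWithinAt
  have hinj : InjOn (fun s : ℝ => s ^ 2) (Ioi 0) := by
    intro x hx y hy h
    simp only [mem_Ioi] at hx hy
    simp only at h
    nlinarith
  have himg : (fun s : ℝ => s ^ 2) '' Ioi 0 = Ioi 0 := by
    ext x
    constructor
    · rintro ⟨s, hs, rfl⟩
      exact pow_pos (show (0:ℝ) < s from hs) 2
    · intro hx
      exact ⟨Real.sqrt x, Real.sqrt_pos.mpr hx, Real.sq_sqrt (le_of_lt hx)⟩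
  have hK : (0:ℝ) < 4 * π * ν := by positivity
  have hsK : (0:ℝ) < Real.sqrt (4 * π * ν) := Real.sqrt_pos.mpr hK
  have hptw : ∀ s ∈ Ioi (0:ℝ), |2 * s| • f (s ^ 2)
      = (2 / Real.sqrt (4 * π * ν)) * Real.exp (-(a * s ^ 2) - (ξ ^ 2 / (4 * ν)) / s ^ 2) := by
    intro s hs
    have hs0 : (0:ℝ) < s := hs
    have hsq : Real.sqrt (4 * π * ν * s ^ 2) = Real.sqrt (4 * π * ν) * s := by
      rw [Real.sqrt_mul hK.le, Real.sqrt_sq hs0.le]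
    have hexp : Real.exp (-a * s ^ 2) * Real.exp (-ξ ^ 2 / (4 * ν * s ^ 2))
        = Real.exp (-(a * s ^ 2) - (ξ ^ 2 / (4 * ν)) / s ^ 2) := by
      rw [← Real.exp_add]
      congr 1
      have h1 : -ξ ^ 2 / (4 * ν * s ^ 2) = -((ξ ^ 2 / (4 * ν)) / s ^ 2) := by
        field_simp
      rw [h1]
      ring
    rw [smul_eq_mul, abs_of_pos (by positivity), hf]
    simp only
    rw [hsq, hexp]
    field_simp
  constructor
  · have h := (integrableOn_image_iff_integrableOn_abs_deriv_smul measurableSet_Ioi hd hinj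
      f).mpr ?_
    · rw [himg] at h
      exact h
    · have h2 : IntegrableOn (fun s : ℝ => (2 / Real.sqrt (4 * π * ν)) *
          Real.exp (-(a * s ^ 2) - (ξ ^ 2 / (4 * ν)) / s ^ 2)) (Ioi 0) :=
        hint.const_mul _
      exact IntegrableOn.congr_fun h2 (fun s hs => (hptw s hs).symm) measurableSet_Ioi
  · have h := integral_image_eq_integral_abs_deriv_smul measurableSet_Ioi hd hinj f
    rw [himg] at h
    rw [h, setIntegral_congr_fun measurableSet_Ioi hptw, integral_const_mul, hval]
    -- final algebra
    have hsa : (0:ℝ) < Real.sqrt a := Real.sqrt_pos.mpr ha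
    have hsν : (0:ℝ) < Real.sqrt ν := Real.sqrt_pos.mpr hν
    have hsπ : (0:ℝ) < Real.sqrt π := Real.sqrt_pos.mpr pi_pos
    have hsqam : Real.sqrt (a * (ξ ^ 2 / (4 * ν))) = Real.sqrt a * |ξ| / (2 * Real.sqrt ν) := by
      rw [show a * (ξ ^ 2 / (4 * ν)) = (Real.sqrt a * |ξ| / (2 * Real.sqrt ν)) ^ 2 by
        rw [div_pow, mul_pow, mul_pow, sq_abs, Real.sq_sqrt ha.le, Real.sq_sqrt hν.le]
        field_simp
        norm_num]
      exact Real.sqrt_sq (by positivity)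
    have h4 : Real.sqrt (4 * π * ν) = 2 * Real.sqrt π * Real.sqrt ν := by
      rw [show 4 * π * ν = (2 * Real.sqrt π * Real.sqrt ν) ^ 2 by
        rw [mul_pow, mul_pow, Real.sq_sqrt pi_pos.le, Real.sq_sqrt hν.le]
        ring]
      exact Real.sqrt_sq (by positivity)
    have hπa : Real.sqrt (π / a) = Real.sqrt π / Real.sqrt a := Real.sqrt_div pi_pos.le a
    have haν : Real.sqrt (a * ν) = Real.sqrt a * Real.sqrt ν := Real.sqrt_mul ha.le ν
    have haν' : Real.sqrt (a / ν) = Real.sqrt a / Real.sqrt ν := Real.sqrt_div ha.le ν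
    rw [hsqam, h4, hπa, haν, haν']
    have hexp : -2 * (Real.sqrt a * |ξ| / (2 * Real.sqrt ν))
        = -(Real.sqrt a / Real.sqrt ν) * |ξ| := by
      field_simp
    rw [hexp]
    field_simp
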